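/- Ramanujan's mock theta function φ satisfies the identity ∑_{n≥0} q^{n²}/(-q²;q²)_n = 1 + ∑_{n≥0} (-1)^n q^{2n+1} (q;q²)_n for all complex q with |q| < 1. -/

import Mathlib

open scoped Real

/-- The q-Pochhammer symbol `(a;b)_n = ∏_{j=0}^{n-1} (1 - a b^j)`. -/
noncomputable def qPoch (a b : ℂ) (n : ℕ) : ℂ := ∏ j ∈ Finset.range n, (1 - a * b ^ j)

open Finset
set_option maxHeartbeats 1000000

noncomputable def gb (Q : ℂ) : ℕ → ℕ → ℂ
  | _, 0 => 1
  | 0, _ + 1 => 0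
  | n + 1, k + 1 => gb Q n k + Q ^ (k + 1) * gb Q n (k + 1)

@[simp] lemma gb_zero_right (Q : ℂ) (n : ℕ) : gb Q n 0 = 1 := by cases n <;> rfl
@[simp] lemma gb_zero_left (Q : ℂ) (k : ℕ) : gb Q 0 (k + 1) = 0 := rfl
lemma gb_succ (Q : ℂ) (n k : ℕ) :
    gb Q (n + 1) (k + 1) = gb Q n k + Q ^ (k + 1) * gb Q n (k + 1) := rfl
lemma gb_eq_zero (Q : ℂ) : ∀ n k, n < k → gb Q n k = 0 := by
  intro n
  induction n with
  | zero => intro k hk; match k, hk with | k + 1, _ => rfl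
  | succ n ih =>
    intro k hk
    match k, hk with
    | k + 1, hk =>
      rw [gb_succ, ih k (by omega), ih (k+1) (by omega)]
      ring

lemma choose_two_succ (k : ℕ) : Nat.choose (k+1) 2 = k + Nat.choose k 2 := by
  rw [Nat.choose_succ_succ, Nat.choose_one_right]

lemma expand (Q : ℂ) : ∀ (n : ℕ) (z : ℂ), ∏ j ∈ range n, (1 - z * Q ^ j) =
    ∑ k ∈ range (n+1), (-z) ^ k * Q ^ (Nat.choose k 2) * gb Q n k := by
  intro n
  induction n with
  | zero => intro z; simp
  | succ n ih =>
    intro z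
    have h1 : ∏ j ∈ range (n+1), (1 - z * Q ^ j)
        = (1 - z) * ∏ j ∈ range n, (1 - (z * Q) * Q ^ j) := by
      rw [Finset.prod_range_succ']
      simp only [pow_zero, mul_one]
      rw [mul_comm]
      congr 1
      exact Finset.prod_congr rfl fun j _ => by rw [pow_succ]; ring
    rw [h1, ih (z * Q)]
    set S : ℂ := ∑ k ∈ range (n+1), (-z) ^ k * Q ^ (Nat.choose (k+1) 2) * gb Q n k with hS
    have e1 : ∑ k ∈ range (n+1), (-(z * Q)) ^ k * Q ^ (Nat.choose k 2) * gb Q n k = S := by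
      refine Finset.sum_congr rfl fun k _ => ?_
      rw [choose_two_succ, show -(z * Q) = (-z) * Q by ring, mul_pow, pow_add]
      ring
    have e2 : ∑ k ∈ range (n+1), (-z) ^ (k+1) * Q ^ (Nat.choose (k+2) 2) * gb Q n (k+1)
        = S - 1 := by
      rw [hS, Finset.sum_range_succ' (fun k => (-z) ^ k * Q ^ (Nat.choose (k+1) 2) * gb Q n k) n,
        Finset.sum_range_succ]
      rw [gb_eq_zero Q n (n+1) (by omega)]
      simp
    rw [e1]
    rw [Finset.sum_range_succ' (fun k => (-z) ^ k * Q ^ (Nat.choose k 2) * gb Q (n+1) k) (n+1)]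
    have e3 : ∑ k ∈ range (n+1), (-z) ^ (k+1) * Q ^ (Nat.choose (k+1) 2) * gb Q (n+1) (k+1)
        = ∑ k ∈ range (n+1), ((-z) * ((-z) ^ k * Q ^ (Nat.choose (k+1) 2) * gb Q n k)
            + (-z) ^ (k+1) * Q ^ (Nat.choose (k+2) 2) * gb Q n (k+1)) := by
      refine Finset.sum_congr rfl fun k _ => ?_
      rw [gb_succ, choose_two_succ (k+1), pow_add]
      ring
    rw [e3, Finset.sum_add_distrib, ← Finset.mul_sum, ← hS, e2]
    simp only [pow_zero, one_mul, Nat.choose_zero_succ, gb_zero_right]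
    ring

lemma gb_norm_le (Q : ℂ) (hQ : ‖Q‖ ≤ 1) : ∀ n k, ‖gb Q n k‖ ≤ (n.choose k : ℝ) := by
  intro n
  induction n with
  | zero =>
    intro k
    cases k with
    | zero => simp
    | succ k => simp
  | succ n ih =>
    intro k
    cases k with
    | zero => simp
    | succ k =>
      rw [gb_succ, Nat.choose_succ_succ, Nat.cast_add]
      calc ‖gb Q n k + Q ^ (k + 1) * gb Q n (k + 1)‖
          ≤ ‖gb Q n k‖ + ‖Q ^ (k + 1) * gb Q n (k + 1)‖ := norm_add_le _ _
        _ ≤ (n.choose k : ℝ) + (n.choose (k+1) : ℝ) := by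
            gcongr
            · exact ih k
            · rw [norm_mul]
              calc ‖Q ^ (k+1)‖ * ‖gb Q n (k+1)‖ ≤ 1 * (n.choose (k+1) : ℝ) := by
                    gcongr <;> [skip; exact ih (k+1)]
                    calc ‖Q ^ (k+1)‖ = ‖Q‖^(k+1) := norm_pow _ _
                      _ ≤ 1 := pow_le_one₀ (norm_nonneg _) hQ
                _ = (n.choose (k+1) : ℝ) := one_mul _

lemma one_sub_ne {x : ℂ} (h : ‖x‖ < 1) : (1 : ℂ) - x ≠ 0 := by
  refine sub_ne_zero.mpr fun he => ?_
  rw [← he] at h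
  simp at h

lemma gb_summable (Q t : ℂ) (hQ : ‖Q‖ ≤ 1) (ht : ‖t‖ < 1) (k : ℕ) :
    Summable (fun n => gb Q n k * t ^ n) := by
  have h1 : Summable (fun n : ℕ => (n : ℝ) ^ k * ‖t‖ ^ n) :=
    summable_pow_mul_geometric_of_norm_lt_one k (by rwa [Real.norm_of_nonneg (norm_nonneg t)])
  refine Summable.of_norm (.of_nonneg_of_le (fun n => norm_nonneg _) (fun n => ?_) h1)
  rw [norm_mul, norm_pow]
  calc ‖gb Q n k‖ * ‖t‖ ^ n ≤ (n.choose k : ℝ) * ‖t‖ ^ n := by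
        gcongr; exact gb_norm_le Q hQ n k
    _ ≤ (n : ℝ) ^ k * ‖t‖ ^ n := by
        gcongr
        exact_mod_cast Nat.choose_le_pow n k

lemma gbGeom (Q t : ℂ) (hQ : ‖Q‖ ≤ 1) (ht : ‖t‖ < 1) : ∀ k,
    HasSum (fun n => gb Q n k * t ^ n) (t ^ k / ∏ j ∈ range (k + 1), (1 - t * Q ^ j)) := by
  have hne : ∀ j : ℕ, (1 : ℂ) - t * Q ^ j ≠ 0 := by
    intro j
    refine one_sub_ne ?_
    rw [norm_mul, norm_pow]
    calc ‖t‖ * ‖Q‖ ^ j ≤ ‖t‖ * 1 := by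
          gcongr; exact pow_le_one₀ (norm_nonneg _) hQ
      _ < 1 := by rwa [mul_one]
  have hprodne : ∀ m : ℕ, (∏ j ∈ range m, (1 - t * Q ^ j)) ≠ 0 :=
    fun m => Finset.prod_ne_zero_iff.mpr fun j _ => hne j
  intro k
  induction k with
  | zero =>
    have := hasSum_geometric_of_norm_lt_one ht
    have h0 : (t : ℂ) ^ 0 / ∏ j ∈ range 1, (1 - t * Q ^ j) = (1 - t)⁻¹ := by
      simp [one_div]
    rw [h0]
    simpa [gb_zero_right] using this
  | succ k ih =>
    have hDne : (∏ j ∈ range (k + 1), (1 - t * Q ^ j)) ≠ 0 := hprodne (k + 1)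
    have hg : Summable (fun n => gb Q n (k + 1) * t ^ n) := gb_summable Q t hQ ht (k + 1)
    have key : (∑' n, gb Q n (k + 1) * t ^ n)
        = t * (t ^ k / ∏ j ∈ range (k + 1), (1 - t * Q ^ j))
          + t * Q ^ (k + 1) * (∑' n, gb Q n (k + 1) * t ^ n) := by
      conv_lhs => rw [Summable.tsum_eq_zero_add hg]
      rw [gb_zero_left, zero_mul, zero_add]
      have e1 : ∀ n : ℕ, gb Q (n + 1) (k + 1) * t ^ (n + 1)
          = t * (gb Q n k * t ^ n) + (t * Q ^ (k + 1)) * (gb Q n (k + 1) * t ^ n) := by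
        intro n
        rw [gb_succ, pow_succ]
        ring
      rw [tsum_congr e1, Summable.tsum_add ((ih.summable).mul_left t) (hg.mul_left (t * Q ^ (k + 1))),
        tsum_mul_left, tsum_mul_left, ih.tsum_eq]
    have hfac : (1 : ℂ) - t * Q ^ (k + 1) ≠ 0 := hne (k + 1)
    have hTval : (∑' n, gb Q n (k + 1) * t ^ n)
        = t ^ (k + 1) / ∏ j ∈ range (k + 2), (1 - t * Q ^ j) := by
      have h2 : (∑' n, gb Q n (k + 1) * t ^ n)
          = t * (t ^ k / ∏ j ∈ range (k + 1), (1 - t * Q ^ j)) / (1 - t * Q ^ (k + 1)) := by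
        rw [eq_div_iff hfac]
        linear_combination key
      rw [h2, Finset.prod_range_succ, mul_div_assoc', ← pow_succ', div_div]
      congr 1
      rw [Finset.prod_range_succ, Finset.prod_range_succ]
    exact hTval ▸ hg.hasSum

lemma nat_key : ∀ k : ℕ, k + 2 * Nat.choose k 2 = k ^ 2 := by
  intro k
  induction k with
  | zero => rfl
  | succ k ih =>
    have h2 : (k+1).choose 2 = k.choose 1 + k.choose 2 := Nat.choose_succ_succ k 1
    rw [h2, Nat.choose_one_right, show (k+1)^2 = k^2 + (2*k+1) by ring]
    omega

lemma gb_one_eq_choose : ∀ n k, gb 1 n k = (n.choose k : ℂ) := by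
  intro n
  induction n with
  | zero =>
    intro k
    cases k with
    | zero => simp [gb_zero_right]
    | succ k => simp [gb_zero_left]
  | succ n ih =>
    intro k
    cases k with
    | zero => simp [gb_zero_right]
    | succ k =>
      rw [gb_succ, ih k, ih (k+1), Nat.choose_succ_succ, Nat.cast_add, one_pow, one_mul]

lemma chooseGeom {x : ℝ} (hx0 : 0 ≤ x) (hx1 : x < 1) (k : ℕ) :
    HasSum (fun n => (n.choose k : ℝ) * x ^ n) (x ^ k / (1 - x) ^ (k + 1)) := by
  have hxc : ‖(x : ℂ)‖ < 1 := by
    rwa [Complex.norm_real, Real.norm_of_nonneg hx0]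
  have h := gbGeom 1 (x : ℂ) (by norm_num) hxc k
  have hprod : (∏ j ∈ range (k + 1), (1 - (x:ℂ) * 1 ^ j)) = ((1 - x : ℝ) : ℂ) ^ (k+1) := by
    rw [Finset.prod_congr rfl fun j _ => by rw [one_pow, mul_one], Finset.prod_const]
    push_cast
    norm_num
  rw [hprod] at h
  have h2 : HasSum (fun n => (((n.choose k : ℝ) * x ^ n : ℝ) : ℂ))
      (((x ^ k / (1 - x) ^ (k + 1) : ℝ)) : ℂ) := by
    convert h using 2 with n
    · push_cast
      rw [gb_one_eq_choose]
    · push_cast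
      ring
  exact Complex.hasSum_ofReal.mp h2

theorem phi_eulerian_eq_alt (q : ℂ) (hq : ‖q‖ < 1) :
    ∑' n : ℕ, q ^ (n ^ 2) / qPoch (-q ^ 2) (q ^ 2) n
      = 1 + ∑' n : ℕ, (-1 : ℂ) ^ n * q ^ (2 * n + 1) * qPoch q (q ^ 2) n := by
  have hr0 : (0 : ℝ) ≤ ‖q‖ := norm_nonneg q
  have hq2 : ‖q ^ 2‖ < 1 := by
    rw [norm_pow]
    exact pow_lt_one₀ hr0 hq (by norm_num)
  have hQ1 : ‖q ^ 2‖ ≤ 1 := le_of_lt hq2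
  have ht : ‖-q ^ 2‖ < 1 := by rwa [norm_neg]
  set F : ℕ → ℕ → ℂ :=
    fun k n => (-1) ^ k * q ^ (k ^ 2 + 1) * (gb (q ^ 2) n k * (-q ^ 2) ^ n) with hF
  -- row sums
  have hrow : ∀ k, HasSum (F k) (q ^ ((k + 1) ^ 2) / qPoch (-q ^ 2) (q ^ 2) (k + 1)) := by
    intro k
    have h := (gbGeom (q ^ 2) (-q ^ 2) hQ1 ht k).mul_left ((-1) ^ k * q ^ (k ^ 2 + 1))
    have hval : (-1 : ℂ) ^ k * q ^ (k ^ 2 + 1)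
          * ((-q ^ 2) ^ k / ∏ j ∈ range (k + 1), (1 - -q ^ 2 * (q ^ 2) ^ j))
        = q ^ ((k + 1) ^ 2) / qPoch (-q ^ 2) (q ^ 2) (k + 1) := by
      rw [qPoch, mul_div_assoc']
      congr 1
      have hm1 : ((-1 : ℂ)) ^ k * (-1) ^ k = 1 := by
        rw [← mul_pow]
        norm_num
      rw [neg_pow (q ^ 2) k, ← pow_mul,
        show (k + 1) ^ 2 = (k ^ 2 + 1) + 2 * k by ring, pow_add]
      linear_combination (q ^ (k ^ 2 + 1) * q ^ (2 * k)) * hm1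
    rwa [hval] at h
  -- norm bounds on rows
  have hnorm : ∀ k n, ‖F k n‖ ≤ ‖q‖ ^ (k ^ 2 + 1) * ((n.choose k : ℝ) * (‖q‖ ^ 2) ^ n) := by
    intro k n
    rw [hF]
    simp only [norm_mul, norm_pow, norm_neg, norm_one, one_pow, one_mul]
    gcongr
    · exact gb_norm_le _ hQ1 n k
  have hrowsum : ∀ k, Summable (fun n => ‖F k n‖) := by
    intro k
    have hc : Summable (fun n => (n.choose k : ℝ) * (‖q‖ ^ 2) ^ n) :=
      (chooseGeom (by positivity) (by
        calc ‖q‖ ^ 2 = ‖q ^ 2‖ := (norm_pow q 2).symm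
          _ < 1 := hq2) k).summable
    exact Summable.of_nonneg_of_le (fun n => norm_nonneg _) (hnorm k)
      (hc.mul_left _)
  -- bound for the sums of rows
  have hx1 : ‖q‖ ^ 2 < 1 := by
    calc ‖q‖ ^ 2 = ‖q ^ 2‖ := (norm_pow q 2).symm
      _ < 1 := hq2
  have h1x : (0 : ℝ) < 1 - ‖q‖ ^ 2 := by linarith
  set B : ℕ → ℝ := fun k => ‖q‖ ^ ((k + 1) ^ 2) / (1 - ‖q‖ ^ 2) ^ (k + 1) with hB
  have hBval : ∀ k, ∑' n, ‖F k n‖ ≤ B k := by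
    intro k
    have hc := chooseGeom (x := ‖q‖ ^ 2) (by positivity) hx1 k
    have hs : Summable (fun n => ‖q‖ ^ (k ^ 2 + 1) * ((n.choose k : ℝ) * (‖q‖ ^ 2) ^ n)) :=
      hc.summable.mul_left _
    have h1 : ∑' n, ‖F k n‖ ≤ ∑' n, ‖q‖ ^ (k ^ 2 + 1) * ((n.choose k : ℝ) * (‖q‖ ^ 2) ^ n) :=
      Summable.tsum_le_tsum (hnorm k) (hrowsum k) hs
    have h2 : ∑' n, ‖q‖ ^ (k ^ 2 + 1) * ((n.choose k : ℝ) * (‖q‖ ^ 2) ^ n)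
        = ‖q‖ ^ (k ^ 2 + 1) * ((‖q‖ ^ 2) ^ k / (1 - ‖q‖ ^ 2) ^ (k + 1)) := by
      rw [tsum_mul_left, hc.tsum_eq]
    have h3 : ‖q‖ ^ (k ^ 2 + 1) * ((‖q‖ ^ 2) ^ k / (1 - ‖q‖ ^ 2) ^ (k + 1)) = B k := by
      rw [hB, ← pow_mul, mul_div_assoc', ← pow_add]
      congr 2
      ring
    exact le_of_le_of_eq h1 (h2.trans h3)
  have hBsummable : Summable B := by
    refine summable_of_ratio_norm_eventually_le (r := 1/2) (by norm_num) ?_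
    have htend : Filter.Tendsto (fun k : ℕ => ‖q‖ ^ k) Filter.atTop (nhds 0) :=
      tendsto_pow_atTop_nhds_zero_of_lt_one hr0 hq
    have hev : ∀ᶠ k in Filter.atTop, ‖q‖ ^ k ≤ (1 - ‖q‖ ^ 2) / 2 := by
      exact htend.eventually_le_const (by linarith : (0:ℝ) < (1 - ‖q‖ ^ 2) / 2)
    filter_upwards [hev] with k hk
    have hBnonneg : ∀ m, 0 ≤ B m := fun m => by
      rw [hB]
      positivity
    rw [Real.norm_of_nonneg (hBnonneg _), Real.norm_of_nonneg (hBnonneg _)]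
    have hsplit : B (k + 1) = B k * (‖q‖ ^ (2 * k + 3) / (1 - ‖q‖ ^ 2)) := by
      rw [hB]
      simp only
      rw [show (k + 1 + 1) ^ 2 = (k + 1) ^ 2 + (2 * k + 3) by ring, pow_add,
        pow_succ (1 - ‖q‖ ^ 2), div_mul_div_comm]
    rw [hsplit]
    have h23 : ‖q‖ ^ (2 * k + 3) ≤ ‖q‖ ^ k :=
      pow_le_pow_of_le_one hr0 hq.le (by omega)
    calc B k * (‖q‖ ^ (2 * k + 3) / (1 - ‖q‖ ^ 2))
        ≤ B k * (1 / 2) := by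
          refine mul_le_mul_of_nonneg_left ?_ (hBnonneg k)
          rw [div_le_div_iff₀ h1x (by norm_num)]
          nlinarith [hBnonneg k]
      _ = 1 / 2 * B k := by ring
  have hnormsum : Summable (fun k => ∑' n, ‖F k n‖) :=
    Summable.of_nonneg_of_le (fun k => tsum_nonneg fun n => norm_nonneg _) hBval hBsummable
  have hUnc : Summable (Function.uncurry F) := by
    refine Summable.of_norm ?_
    rw [summable_prod_of_nonneg (fun p => norm_nonneg _)]
    exact ⟨fun k => hrowsum k, hnormsum⟩
  -- columns
  have hcol : ∀ n, ∑' k, F k n = (-1) ^ n * q ^ (2 * n + 1) * qPoch q (q ^ 2) n := by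
    intro n
    rw [tsum_eq_sum (s := range (n + 1)) (fun k hk => by
      rw [hF]
      simp only
      rw [gb_eq_zero _ n k (by simpa using hk)]
      ring)]
    rw [qPoch, expand (q ^ 2) n q, Finset.mul_sum]
    refine Finset.sum_congr rfl fun k _ => ?_
    rw [hF]
    simp only
    rw [neg_pow q k, neg_pow (q ^ 2) n, ← pow_mul q 2 n,
      show k ^ 2 + 1 = k + 2 * Nat.choose k 2 + 1 by rw [nat_key],
      ← pow_mul q 2 (Nat.choose k 2), pow_add, pow_add, pow_add, pow_one]
    ring
  -- assemble
  have hrowsummable : Summable (fun k => q ^ ((k + 1) ^ 2) / qPoch (-q ^ 2) (q ^ 2) (k + 1)) := by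
    have h1 : Summable (fun k => ∑' n, F k n) :=
      Summable.of_norm_bounded hnormsum (fun k => norm_tsum_le_tsum_norm (hrowsum k))
    refine h1.congr fun k => (hrow k).tsum_eq
  have hLsum : Summable (fun n => q ^ (n ^ 2) / qPoch (-q ^ 2) (q ^ 2) n) := by
    refine (summable_nat_add_iff 1).1 ?_
    exact hrowsummable
  rw [Summable.tsum_eq_zero_add hLsum]
  have h00 : q ^ (0 ^ 2) / qPoch (-q ^ 2) (q ^ 2) 0 = 1 := by
    simp [qPoch]
  rw [h00]
  congr 1
  calc ∑' k, q ^ ((k + 1) ^ 2) / qPoch (-q ^ 2) (q ^ 2) (k + 1)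
      = ∑' k, ∑' n, F k n := by
        exact (tsum_congr fun k => (hrow k).tsum_eq).symm
    _ = ∑' n, ∑' k, F k n := (Summable.tsum_comm hUnc).symm
    _ = ∑' n, (-1) ^ n * q ^ (2 * n + 1) * qPoch q (q ^ 2) n := tsum_congr hcol
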